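/- Let 0 < q ≤ 2, let ε > 0, and let x, y be arbitrary real numbers. Then |x|^q ≤ (q/2)·(y² + ε)^((q−2)/2)·x² + ((2−q)/2)·(y² + ε)^(q/2). -/
import Mathlib


/-- ε-perturbed version of Lemma 1. -/
theorem lq_majorization_eps (q ε x y : ℝ) (hq0 : 0 < q) (hq2 : q ≤ 2) (hε : 0 < ε) :
    |x| ^ q ≤ q / 2 * (y ^ 2 + ε) ^ ((q - 2) / 2) * x ^ 2
      + (2 - q) / 2 * (y ^ 2 + ε) ^ (q / 2) := by
  set a : ℝ := x ^ 2 with ha_def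
  set b : ℝ := y ^ 2 + ε with hb_def
  have ha : (0:ℝ) ≤ a := sq_nonneg x
  have hb : (0:ℝ) < b := by positivity
  set t : ℝ := q / 2 with ht_def
  have ht0 : (0:ℝ) ≤ t := by positivity
  have ht1 : (0:ℝ) ≤ 1 - t := by simp only [ht_def]; linarith
  have key : a ^ t * b ^ (1 - t) ≤ t * a + (1 - t) * b :=
    Real.geom_mean_le_arith_mean2_weighted ht0 ht1 ha hb.le (by ring)
  have hx : |x| ^ q = a ^ t := by
    rw [ha_def, ← sq_abs x, ← Real.rpow_natCast |x| 2, ← Real.rpow_mul (abs_nonneg x)]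
    congr 1
    rw [ht_def]; push_cast; ring
  have hmul := mul_le_mul_of_nonneg_right key (Real.rpow_nonneg hb.le (t - 1))
  have hL : a ^ t * b ^ (1 - t) * b ^ (t - 1) = a ^ t := by
    rw [mul_assoc, ← Real.rpow_add hb]
    norm_num
  have hR : (t * a + (1 - t) * b) * b ^ (t - 1)
      = t * b ^ (t - 1) * a + (1 - t) * b ^ t := by
    have : b * b ^ (t - 1) = b ^ t := by
      nth_rewrite 1 [← Real.rpow_one b]
      rw [← Real.rpow_add hb]
      norm_num
    calc (t * a + (1 - t) * b) * b ^ (t - 1)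
        = t * b ^ (t - 1) * a + (1 - t) * (b * b ^ (t - 1)) := by ring
      _ = t * b ^ (t - 1) * a + (1 - t) * b ^ t := by rw [this]
  rw [hL, hR] at hmul
  have h1 : (q - 2) / 2 = t - 1 := by rw [ht_def]; ring
  have h2 : (2 - q) / 2 = 1 - t := by rw [ht_def]; ring
  rw [hx, h1, h2]
  exact hmul
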